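/- Let α ∈ ℝ and ν, μ ∈ ℂ satisfy Re μ > Re ν > -1. Then P_ν^{-μ}(tanh α) = (2^ν · e^{-αμ} · (cosh α)^{-ν} / (Γ(μ-ν) Γ(1+ν))) · ∫_0^∞ e^{-tμ} (sinh(t/2))^ν (cosh(t/2 + α))^ν dt, where all complex powers of positive reals are principal branches. -/

import Mathlib

open MeasureTheory Set Filter

noncomputable def pochC (a : ℂ) (n : ℕ) : ℂ := (ascPochhammer ℂ n).eval a

/-- Ferrers function of the first kind `P_ν^μ(x)`. -/
noncomputable def ferrersP (ν μ : ℂ) (x : ℝ) : ℂ :=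
  (((1 + x) / (1 - x) : ℝ) : ℂ) ^ (μ / 2) *
    ∑' n : ℕ, pochC (-ν) n * pochC (ν + 1) n /
        (Complex.Gamma ((n : ℂ) + 1 - μ) * (n.factorial : ℂ)) *
      (((1 - x) / 2 : ℝ) : ℂ) ^ n


lemma pochC_zero (a : ℂ) : pochC a 0 = 1 := by simp [pochC]
lemma pochC_succ (a : ℂ) (n : ℕ) : pochC a (n+1) = pochC a n * (a + n) := by
  simp [pochC, ascPochhammer_succ_right]

lemma tendsto_aux (b : ℝ) : Tendsto (fun n : ℕ => (b + n) / (n+1)) atTop (nhds 1) := by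
  have h1 : Tendsto (fun n : ℕ => (b-1) / (n+1)) atTop (nhds 0) := by
    apply Tendsto.div_atTop tendsto_const_nhds
    exact tendsto_atTop_add_const_right _ 1 tendsto_natCast_atTop_atTop
  have h2 := h1.add (tendsto_const_nhds (x := (1:ℝ)))
  rw [zero_add] at h2
  convert h2 using 2 with n
  have hne : (n:ℝ) + 1 ≠ 0 := by positivity
  field_simp
  ring

/-- key summability helper -/
lemma summable_poch_aux (c : ℂ) {r : ℝ} (hr0 : 0 ≤ r) (hr : r < 1) :
    Summable (fun n : ℕ => ‖pochC c n‖ / n.factorial * ((n:ℝ)+1)^2 * r^n) := by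
  set f : ℕ → ℝ := fun n => ‖pochC c n‖ / n.factorial * ((n:ℝ)+1)^2 * r^n with hf
  set ρ : ℝ := (1 + r)/2 with hρ
  have hρ1 : ρ < 1 := by rw [hρ]; linarith
  apply summable_of_ratio_norm_eventually_le hρ1
  have htend : Tendsto (fun n : ℕ => (‖c‖ + n) / (n+1) * (((n:ℝ)+2)/(n+1))^2 * r) atTop
      (nhds (1 * 1^2 * r)) := by
    apply Tendsto.mul _ tendsto_const_nhds
    apply Tendsto.mul (tendsto_aux ‖c‖)
    apply Tendsto.pow
    convert tendsto_aux 2 using 2 with n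
    push_cast; ring
  rw [one_mul, one_pow, one_mul] at htend
  have hev : ∀ᶠ n : ℕ in atTop, (‖c‖ + n) / (n+1) * (((n:ℝ)+2)/(n+1))^2 * r ≤ ρ := by
    apply Filter.Tendsto.eventually_le_const _ htend
    rw [hρ]; linarith
  filter_upwards [hev] with n hn
  have hfn : ‖f (n+1)‖ = f (n+1) := by
    rw [Real.norm_eq_abs, abs_of_nonneg]; positivity
  have hfn' : ‖f n‖ = f n := by
    rw [Real.norm_eq_abs, abs_of_nonneg]; positivity
  rw [hfn, hfn']
  set Q : ℝ := (‖c‖ + n) / (n+1) * (((n:ℝ)+2)/(n+1))^2 * r with hQ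
  have h1 : (0:ℝ) < (n:ℝ)+1 := by positivity
  have h2 : (0:ℝ) < (n.factorial : ℝ) := by positivity
  have hpoch : ‖pochC c (n+1)‖ ≤ ‖pochC c n‖ * (‖c‖ + n) := by
    rw [pochC_succ, norm_mul]
    gcongr
    calc ‖c + (n:ℂ)‖ ≤ ‖c‖ + ‖(n:ℂ)‖ := norm_add_le _ _
      _ = ‖c‖ + n := by simp
  have e1 : f (n+1) = ‖pochC c (n+1)‖ / (((n:ℝ)+1) * n.factorial) * ((n:ℝ)+2)^2 * r^(n+1) := by
    simp only [hf]
    rw [Nat.factorial_succ]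
    push_cast
    ring_nf
  have e2 : Q * f n = (‖pochC c n‖ * (‖c‖ + n)) / (((n:ℝ)+1) * n.factorial) * ((n:ℝ)+2)^2
      * r^(n+1) := by
    simp only [hQ, hf]
    field_simp
    ring
  rw [e1]
  have step : ‖pochC c (n+1)‖ / (((n:ℝ)+1) * n.factorial) * ((n:ℝ)+2)^2 * r^(n+1) ≤ Q * f n := by
    rw [e2]; gcongr
  refine step.trans (mul_le_mul_of_nonneg_right hn ?_)
  simp only [hf]; positivity


set_option maxHeartbeats 1000000 in
lemma binomial_hasSum (ν : ℂ) {x : ℝ} (hx0 : 0 < x) (hx1 : x < 1) :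
    HasSum (fun n : ℕ => pochC (-ν) n / n.factorial * (x:ℂ)^n) ((1 - (x:ℂ))^ν) := by
  set a : ℕ → ℂ := fun n => pochC (-ν) n / n.factorial with ha
  clear_value a
  set r : ℝ := (1+x)/2 with hrdef
  clear_value r
  have hr0 : 0 < r := by rw [hrdef]; linarith
  have hr1 : r < 1 := by rw [hrdef]; linarith
  have hxr : x < r := by rw [hrdef]; linarith
  -- norm of terms
  have hnorm : ∀ (n : ℕ) (y : ℝ), ‖a n * (y:ℂ)^n‖ = ‖pochC (-ν) n‖ / n.factorial * |y|^n := by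
    intro n y
    rw [norm_mul, norm_pow, ha]
    simp [norm_div]
  -- summability of the series at each |y| ≤ r
  have hsum : ∀ y : ℝ, |y| ≤ r → Summable (fun n => a n * (y:ℂ)^n) := by
    intro y hy
    apply Summable.of_norm_bounded (summable_poch_aux (-ν) hr0.le hr1)
    intro n
    rw [hnorm]
    have h1 : |y|^n ≤ r^n := pow_le_pow_left₀ (abs_nonneg y) hy n
    have h2 : (1:ℝ) ≤ ((n:ℝ)+1)^2 := by nlinarith [Nat.cast_nonneg (α := ℝ) n]
    calc ‖pochC (-ν) n‖ / n.factorial * |y|^n ≤ ‖pochC (-ν) n‖ / n.factorial * r^n := by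
          gcongr
      _ ≤ ‖pochC (-ν) n‖ / n.factorial * ((n:ℝ)+1)^2 * r^n := by
          rw [mul_assoc]
          have : (0:ℝ) ≤ ‖pochC (-ν) n‖ / n.factorial := by positivity
          nlinarith [pow_nonneg hr0.le n, this, mul_nonneg this (pow_nonneg hr0.le n)]
  -- derivative bound
  set u : ℕ → ℝ := fun n => ‖pochC (-ν) n‖ / n.factorial * ((n:ℝ)+1)^2 * r^(n-1) with hu
  clear_value u
  have hu_sum : Summable u := by
    rw [← summable_nat_add_iff 1]
    have h := (summable_nat_add_iff 1).2 (summable_poch_aux (-ν) hr0.le hr1)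
    have h2 := h.mul_left (1/r)
    apply h2.congr
    intro n
    simp only [hu]
    rw [pow_succ]
    have : (n:ℕ) + 1 - 1 = n := rfl
    rw [this]
    field_simp
    ring
  set g' : ℕ → ℝ → ℂ := fun n y => (n:ℂ) * a n * (y:ℂ)^(n-1) with hg'
  clear_value g'
  have hgderiv : ∀ (n : ℕ) (y : ℝ), y ∈ Ioo (-r) r → HasDerivAt (fun z : ℝ => a n * (z:ℂ)^n) (g' n y) y := by
    intro n y _
    have h1 : HasDerivAt (fun z : ℂ => z^n) ((n:ℂ) * (y:ℂ)^(n-1)) (y:ℂ) := hasDerivAt_pow n _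
    have h2 := h1.comp_ofReal
    have h3 := h2.const_mul (a n)
    simpa [hg', mul_comm, mul_assoc, mul_left_comm] using h3
  have hg'bound : ∀ (n : ℕ) (y : ℝ), y ∈ Ioo (-r) r → ‖g' n y‖ ≤ u n := by
    intro n y hy
    simp only [hg', hu]
    rw [norm_mul, norm_mul, norm_pow]
    have hyabs : |y| ≤ r := by
      rw [abs_le]; exact ⟨hy.1.le, hy.2.le⟩
    have : ‖(y:ℂ)‖ = |y| := by simp
    rw [this]
    have h1 : |y|^(n-1) ≤ r^(n-1) := pow_le_pow_left₀ (abs_nonneg y) hyabs _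
    have h2 : ‖(n:ℂ)‖ = (n:ℝ) := by simp
    rw [h2]
    have h3 : ‖a n‖ = ‖pochC (-ν) n‖ / n.factorial := by
      simp [ha, norm_div]
    rw [h3]
    have h4 : (n:ℝ) ≤ ((n:ℝ)+1)^2 := by nlinarith [Nat.cast_nonneg (α := ℝ) n]
    calc (n:ℝ) * (‖pochC (-ν) n‖ / n.factorial) * |y|^(n-1)
        ≤ ((n:ℝ)+1)^2 * (‖pochC (-ν) n‖ / n.factorial) * r^(n-1) := by
          gcongr
      _ = ‖pochC (-ν) n‖ / n.factorial * ((n:ℝ)+1)^2 * r^(n-1) := by ring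
  set F : ℝ → ℂ := fun y => ∑' n, a n * (y:ℂ)^n with hF
  set D : ℝ → ℂ := fun y => ∑' n, g' n y with hD
  clear_value F D
  have hio : IsOpen (Ioo (-r) r) := isOpen_Ioo
  have hconn : IsPreconnected (Ioo (-r) r) := (convex_Ioo _ _).isPreconnected
  have h0mem : (0:ℝ) ∈ Ioo (-r) r := ⟨by linarith, hr0⟩
  have hFderiv : ∀ y ∈ Ioo (-r) r, HasDerivAt F (D y) y := by
    intro y hy
    rw [hF, hD]
    exact hasDerivAt_tsum_of_isPreconnected hu_sum hio hconn hgderiv hg'bound h0mem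
      (hsum 0 (by simpa using hr0.le)) hy
  -- the ODE
  have hODE : ∀ y ∈ Ioo (-r) r, (1 - (y:ℂ)) * D y = -ν * F y := by
    intro y hy
    have hyabs : |y| ≤ r := by rw [abs_le]; exact ⟨hy.1.le, hy.2.le⟩
    have hDsum : Summable (fun n => g' n y) :=
      Summable.of_norm_bounded hu_sum (fun n => hg'bound n y hy)
    have hDhas : HasSum (fun n => g' n y) (D y) := by rw [hD]; exact hDsum.hasSum
    have h1 : HasSum (fun n => g' (n+1) y) (D y) := by
      have h0 : g' 0 y = 0 := by simp [hg']
      rw [hasSum_nat_add_iff (f := fun n => g' n y) 1]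
      simpa [h0] using hDhas
    have h1' : HasSum (fun n : ℕ => ((n:ℂ)+1) * a (n+1) * (y:ℂ)^n) (D y) := by
      have he : (fun n : ℕ => g' (n+1) y) = (fun n : ℕ => ((n:ℂ)+1) * a (n+1) * (y:ℂ)^n) := by
        funext n
        simp only [hg', Nat.add_sub_cancel]
        push_cast
        ring
      rwa [he] at h1
    have h2' : HasSum (fun n : ℕ => (n:ℂ) * a n * (y:ℂ)^n) ((y:ℂ) * D y) := by
      have := hDhas.mul_left (y:ℂ)
      have he : (fun n : ℕ => (y:ℂ) * g' n y) = (fun n : ℕ => (n:ℂ) * a n * (y:ℂ)^n) := by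
        funext n
        cases n with
        | zero => simp [hg']
        | succ m =>
          simp only [hg', Nat.add_sub_cancel]
          rw [pow_succ]
          ring
      rwa [he] at this
    have h3' : HasSum (fun n : ℕ => a n * (y:ℂ)^n) (F y) := by
      rw [hF]; exact (hsum y hyabs).hasSum
    have hcomb : HasSum (fun n : ℕ => ((n:ℂ)+1) * a (n+1) * (y:ℂ)^n - (n:ℂ) * a n * (y:ℂ)^n
        + ν * (a n * (y:ℂ)^n)) (D y - (y:ℂ) * D y + ν * F y) :=
      (h1'.sub h2').add (h3'.mul_left ν)
    have hzero : (fun n : ℕ => ((n:ℂ)+1) * a (n+1) * (y:ℂ)^n - (n:ℂ) * a n * (y:ℂ)^n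
        + ν * (a n * (y:ℂ)^n)) = fun _ => (0:ℂ) := by
      funext n
      have hrec : ((n:ℂ)+1) * a (n+1) = ((n:ℂ) - ν) * a n := by
        have hn1 : ((n:ℂ)+1) ≠ 0 := Nat.cast_add_one_ne_zero n
        have hfc : ((n.factorial : ℂ)) ≠ 0 := Nat.cast_ne_zero.mpr n.factorial_ne_zero
        have hfac : (((n+1).factorial : ℂ)) = ((n:ℂ)+1) * n.factorial := by
          rw [Nat.factorial_succ]; push_cast; ring
        simp only [ha]
        rw [pochC_succ, hfac]
        field_simp
        ring
      rw [hrec]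
      ring
    rw [hzero] at hcomb
    have := hasSum_zero.unique hcomb
    have hlin : D y - (y:ℂ) * D y + ν * F y = 0 := this.symm
    linear_combination hlin
  -- the auxiliary function is constant
  set h : ℝ → ℂ := fun y => (1 - (y:ℂ))^(-ν) with hh
  set φ : ℝ → ℂ := fun y => F y * h y with hφ
  have hφderiv : ∀ y ∈ Ioo (-r) r, HasDerivAt φ 0 y := by
    intro y hy
    have hypos : (0:ℝ) < 1 - y := by
      have := hy.2; linarith
    have hslit : (1 - (y:ℂ)) ∈ Complex.slitPlane := by
      rw [Complex.mem_slitPlane_iff]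
      left
      simpa using hypos
    have hd2c : HasDerivAt (fun z : ℂ => (1 - z)^(-ν))
        ((-ν) * (1 - (y:ℂ))^(-ν - 1) * (-1)) (y:ℂ) := by
      have hinner : HasDerivAt (fun z : ℂ => 1 - z) (-1) (y:ℂ) := by
        simpa using (hasDerivAt_id (y:ℂ)).const_sub 1
      exact hinner.cpow_const hslit
    have hd2 : HasDerivAt h (ν * (1 - (y:ℂ))^(-ν - 1)) y := by
      have := hd2c.comp_ofReal
      simp only [hh]
      convert this using 1
      ring
    have hd1 : HasDerivAt F (D y) y := hFderiv y hy
    have hprod := hd1.mul hd2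
    have hne : (1 - (y:ℂ)) ≠ 0 := by
      simp only [ne_eq, sub_eq_zero]
      intro hcon
      have : (1:ℂ).re = ((y:ℂ)).re := by rw [hcon]
      simp at this
      linarith
    have hkey : D y * h y + F y * (ν * (1 - (y:ℂ))^(-ν - 1)) = 0 := by
      have hsplit : h y = (1 - (y:ℂ))^(-ν - 1) * (1 - (y:ℂ)) := by
        simp only [hh]
        conv_lhs => rw [show (-ν) = (-ν - 1) + 1 by ring]
        rw [Complex.cpow_add _ _ hne, Complex.cpow_one]
      rw [hsplit]
      linear_combination (1 - (y:ℂ))^(-ν - 1) * hODE y hy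
    have hfinal := hd1.mul hd2
    rw [hkey] at hfinal
    rw [hφ]
    exact hfinal
  clear_value h φ
  -- conclude constancy on [0, x]
  have hsub : Icc (0:ℝ) x ⊆ Ioo (-r) r := by
    intro y hy
    exact ⟨by linarith [hy.1], by linarith [hy.2]⟩
  have hconstAll := constant_of_derivWithin_zero (f := φ) (a := 0) (b := x)
    (fun y hy => ((hφderiv y (hsub hy)).differentiableAt).differentiableWithinAt)
    (fun y hy => ((hφderiv y (hsub (Ico_subset_Icc_self hy))).hasDerivWithinAt).derivWithin
      (uniqueDiffOn_Icc hx0 y (Ico_subset_Icc_self hy)))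
  have hconst : φ x = φ 0 := hconstAll x (right_mem_Icc.mpr hx0.le)
  have hF0 : F 0 = 1 := by
    rw [hF]
    simp only [Complex.ofReal_zero]
    rw [tsum_eq_single 0 (fun n hn => by simp [zero_pow hn])]
    simp [ha, pochC_zero]
  have hφ0 : φ 0 = 1 := by
    rw [hφ]
    simp only [hh, Complex.ofReal_zero, sub_zero, Complex.one_cpow, mul_one, hF0]
  have hnex : (1 - (x:ℂ)) ≠ 0 := by
    simp only [ne_eq, sub_eq_zero]
    intro hcon
    have : (1:ℂ).re = ((x:ℂ)).re := by rw [hcon]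
    simp at this
    linarith
  have hφx : F x * (1 - (x:ℂ))^(-ν) = 1 := by
    have := hconst
    rw [hφ0, hφ, hh] at this
    exact this
  have hpow_ne : (1 - (x:ℂ))^ν ≠ 0 := by
    simp [Complex.cpow_eq_zero_iff, hnex]
  have hFx : F x = (1 - (x:ℂ))^ν := by
    rw [Complex.cpow_neg] at hφx
    field_simp at hφx
    exact hφx
  have hfin : HasSum (fun n : ℕ => a n * (x:ℂ)^n) (F x) := by
    rw [hF]
    exact (hsum x (by rw [_root_.abs_of_nonneg hx0.le]; exact hxr.le)).hasSum
  rw [hFx, ha] at hfin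
  exact hfin



/-- substitution u = 1 - exp(-t) -/
lemma subst_exp (f : ℝ → ℂ) :
    ∫ u in Ioo (0:ℝ) 1, f u = ∫ t in Ioi (0:ℝ), Real.exp (-t) • f (1 - Real.exp (-t)) := by
  have himg : (fun t : ℝ => 1 - Real.exp (-t)) '' (Ioi 0) = Ioo 0 1 := by
    ext u
    constructor
    · rintro ⟨t, ht, rfl⟩
      have h1 : Real.exp (-t) < 1 := by
        rw [Real.exp_lt_one_iff]; simpa using ht
      have h2 : 0 < Real.exp (-t) := Real.exp_pos _
      simp only [mem_Ioo]
      exact ⟨by linarith, by linarith⟩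
    · rintro ⟨hu0, hu1⟩
      refine ⟨-Real.log (1 - u), ?_, ?_⟩
      · simp only [mem_Ioi]
        have : Real.log (1 - u) < 0 := Real.log_neg (by linarith) (by linarith)
        linarith
      · simp only
        rw [neg_neg, Real.exp_log (by linarith)]
        ring
  have hderiv : ∀ t ∈ Ioi (0:ℝ), HasDerivWithinAt (fun t : ℝ => 1 - Real.exp (-t))
      (Real.exp (-t)) (Ioi 0) t := by
    intro t _
    have h1 : HasDerivAt (fun t : ℝ => Real.exp (-t)) (-Real.exp (-t)) t := by
      have := (Real.hasDerivAt_exp (-t)).comp t (hasDerivAt_neg t)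
      simp only [mul_neg, mul_one] at this
      exact this
    simpa using (h1.const_sub 1).hasDerivWithinAt
  have hinj : InjOn (fun t : ℝ => 1 - Real.exp (-t)) (Ioi 0) := by
    have : StrictMonoOn (fun t : ℝ => 1 - Real.exp (-t)) (Ioi 0) := by
      intro s _ t _ hst
      simp only
      have : Real.exp (-t) < Real.exp (-s) := Real.exp_lt_exp.mpr (by linarith)
      linarith
    exact this.injOn
  rw [← himg, integral_image_eq_integral_abs_deriv_smul measurableSet_Ioi hderiv hinj f]
  apply setIntegral_congr_fun measurableSet_Ioi
  intro t _
  simp [abs_of_pos (Real.exp_pos (-t))]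

lemma cpow_exp (x : ℝ) (s : ℂ) : ((Real.exp x : ℝ) : ℂ)^s = Complex.exp (x * s) := by
  rw [Complex.cpow_def_of_ne_zero (by exact_mod_cast (Real.exp_pos x).ne')]
  congr 1
  rw [← Complex.ofReal_log (Real.exp_pos x).le, Real.log_exp]

lemma gamma_poch (z : ℂ) (hz : 0 < z.re) (n : ℕ) :
    Complex.Gamma (z + n) = Complex.Gamma z * (ascPochhammer ℂ n).eval z := by
  induction n with
  | zero => simp
  | succ m ih =>
    have hne : z + m ≠ 0 := by
      intro hcon
      have : (z + (m:ℂ)).re = 0 := by rw [hcon]; simp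
      simp only [Complex.add_re, Complex.natCast_re] at this
      have : (0:ℝ) ≤ (m:ℝ) := Nat.cast_nonneg m
      linarith
    have h1 : z + ((m+1 : ℕ):ℂ) = (z + m) + 1 := by push_cast; ring
    rw [h1, Complex.Gamma_add_one _ hne, ih, ascPochhammer_succ_right]
    simp [Polynomial.eval_mul]
    ring


lemma gamma_poch' (z : ℂ) (hz : 0 < z.re) (n : ℕ) :
    Complex.Gamma (z + n) = Complex.Gamma z * pochC z n := gamma_poch z hz n

noncomputable def wA (α : ℝ) : ℝ := Real.exp (-α) / (2 * Real.cosh α)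

lemma wA_pos (α : ℝ) : 0 < wA α := by
  unfold wA
  positivity

lemma wA_lt_one (α : ℝ) : wA α < 1 := by
  unfold wA
  rw [div_lt_one (by positivity)]
  rw [Real.cosh_eq]
  have := Real.exp_pos α
  have := Real.exp_pos (-α)
  linarith

lemma term_integrable (ν μ : ℂ) (hν : -1 < ν.re) (hμν : ν.re < μ.re) (n : ℕ) :
    IntegrableOn (fun u : ℝ => (u:ℂ)^(ν + n) * (1 - (u:ℂ))^(μ - ν - 1)) (Ioo 0 1) := by
  have h1 : 0 < (ν + (n:ℂ) + 1).re := by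
    simp only [Complex.add_re, Complex.natCast_re, Complex.one_re]
    have : (0:ℝ) ≤ n := Nat.cast_nonneg n
    linarith
  have h2 : 0 < (μ - ν).re := by
    simp only [Complex.sub_re]; linarith
  have hconv := Complex.betaIntegral_convergent h1 h2
  rw [intervalIntegrable_iff, uIoc_of_le zero_le_one] at hconv
  have : IntegrableOn (fun u : ℝ => (u:ℂ)^(ν + (n:ℂ) + 1 - 1) * (1 - (u:ℂ))^(μ - ν - 1)) (Ioo 0 1) :=
    hconv.mono_set Ioo_subset_Ioc_self
  simpa [add_sub_cancel_right] using this

lemma term_integral (ν μ : ℂ) (hν : -1 < ν.re) (hμν : ν.re < μ.re) (n : ℕ) :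
    ∫ u in Ioo (0:ℝ) 1, (u:ℂ)^(ν + n) * (1 - (u:ℂ))^(μ - ν - 1)
      = Complex.Gamma (ν + 1 + n) * Complex.Gamma (μ - ν) / Complex.Gamma (μ + 1 + n) := by
  have h1 : 0 < (ν + (n:ℂ) + 1).re := by
    simp only [Complex.add_re, Complex.natCast_re, Complex.one_re]
    have : (0:ℝ) ≤ n := Nat.cast_nonneg n
    linarith
  have h2 : 0 < (μ - ν).re := by
    simp only [Complex.sub_re]; linarith
  have hbeta := Complex.Gamma_mul_Gamma_eq_betaIntegral h1 h2
  have hG : Complex.Gamma (μ + 1 + n) ≠ 0 := by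
    apply Complex.Gamma_ne_zero_of_re_pos
    simp only [Complex.add_re, Complex.natCast_re, Complex.one_re]
    have : (0:ℝ) ≤ n := Nat.cast_nonneg n
    linarith
  have harg : ν + (n:ℂ) + 1 + (μ - ν) = μ + 1 + n := by ring
  rw [harg] at hbeta
  have hbi : Complex.betaIntegral (ν + (n:ℂ) + 1) (μ - ν)
      = ∫ u in Ioo (0:ℝ) 1, (u:ℂ)^(ν + n) * (1 - (u:ℂ))^(μ - ν - 1) := by
    rw [Complex.betaIntegral]
    rw [intervalIntegral.integral_of_le zero_le_one, ← integral_Ioc_eq_integral_Ioo]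
    congr 1
    funext u
    rw [add_sub_cancel_right]
  rw [hbi] at hbeta
  have harg2 : ν + 1 + (n:ℂ) = ν + (n:ℂ) + 1 := by ring
  rw [harg2]
  rw [eq_div_iff hG]
  linear_combination -hbeta

theorem integral_eval (α : ℝ) (ν μ : ℂ) (hν : -1 < ν.re) (hμν : ν.re < μ.re) :
    (∫ t in Set.Ioi (0 : ℝ),
        Complex.exp (-(t : ℂ) * μ) * ((Real.sinh (t / 2) : ℝ) : ℂ) ^ ν *
          ((Real.cosh (t / 2 + α) : ℝ) : ℂ) ^ ν)
    = (((Real.cosh α / 2 : ℝ)) : ℂ)^ν * Complex.Gamma (ν+1) * Complex.Gamma (μ-ν) *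
      ∑' n : ℕ, pochC (-ν) n * pochC (ν + 1) n /
        (Complex.Gamma ((n : ℂ) + 1 + μ) * (n.factorial : ℂ)) * ((wA α : ℝ):ℂ)^n := by
  have hw0 : 0 < wA α := wA_pos α
  have hw1 : wA α < 1 := wA_lt_one α
  have hc : 0 < Real.cosh α := Real.cosh_pos α
  set C : ℂ := (((Real.cosh α / 2 : ℝ)) : ℂ)^ν with hC
  set g : ℝ → ℂ := fun u => C * ((1 - (u:ℂ))^(μ-ν-1) * ((u:ℝ):ℂ)^ν * ((1 - wA α*u :ℝ):ℂ)^ν)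
    with hg
  clear_value C g
  have hpt : ∀ t ∈ Ioi (0:ℝ),
      Complex.exp (-(t : ℂ) * μ) * ((Real.sinh (t / 2) : ℝ) : ℂ) ^ ν *
        ((Real.cosh (t / 2 + α) : ℝ) : ℂ) ^ ν
      = Real.exp (-t) • g (1 - Real.exp (-t)) := by
    intro t ht
    rw [mem_Ioi] at ht
    have hE0 : 0 < Real.exp (-t) := Real.exp_pos _
    have hE1 : Real.exp (-t) < 1 := by
      rw [Real.exp_lt_one_iff]; linarith
    have hu0 : 0 < 1 - Real.exp (-t) := by linarith
    have hu1 : 1 - Real.exp (-t) < 1 := by linarith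
    have hsinh : 0 < Real.sinh (t/2) := Real.sinh_pos_iff.mpr (by linarith)
    have hcosh2 : 0 < Real.cosh (t/2+α) := Real.cosh_pos (t/2+α)
    have hwu : 0 < 1 - wA α * (1 - Real.exp (-t)) := by nlinarith
    have hkey : Real.sinh (t/2) * Real.cosh (t/2+α)
        = (Real.cosh α/2) * ((Real.exp t * (1 - Real.exp (-t)))
            * (1 - wA α*(1 - Real.exp (-t)))) := by
      unfold wA
      have hE := (Real.exp_pos (t/2)).ne'
      have hA := (Real.exp_pos α).ne'
      have hcα := hc.ne'
      have e1 : Real.exp t = Real.exp (t/2) * Real.exp (t/2) := by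
        rw [← Real.exp_add]; ring_nf
      have e2 : Real.exp (-t) = (Real.exp (t/2) * Real.exp (t/2))⁻¹ := by
        rw [Real.exp_neg, e1]
      have e3 : Real.exp (t/2+α) = Real.exp (t/2) * Real.exp α := Real.exp_add _ _
      have e4 : Real.exp (-(t/2+α)) = (Real.exp (t/2) * Real.exp α)⁻¹ := by
        rw [Real.exp_neg, e3]
      have e6 : Real.exp (-(t/2)) = (Real.exp (t/2))⁻¹ := Real.exp_neg _
      have e5 : Real.exp (-α) = (Real.exp α)⁻¹ := Real.exp_neg α
      rw [Real.sinh_eq, Real.cosh_eq (t/2+α), Real.cosh_eq α, e1, e2, e3, e4, e5, e6]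
      have hden : Real.exp α + (Real.exp α)⁻¹ ≠ 0 := by positivity
      field_simp
      ring
    have hsc : ((Real.sinh (t/2) : ℝ):ℂ)^ν * ((Real.cosh (t/2+α) : ℝ):ℂ)^ν
        = ((Real.cosh α/2 : ℝ):ℂ)^ν * ((((Real.exp t * (1 - Real.exp (-t)))) : ℝ):ℂ)^ν
          * (((1 - wA α*(1 - Real.exp (-t))):ℝ):ℂ)^ν := by
      rw [← Complex.mul_cpow_ofReal_nonneg hsinh.le hcosh2.le, ← Complex.ofReal_mul, hkey,
        Complex.ofReal_mul, Complex.mul_cpow_ofReal_nonneg (by positivity) (by positivity),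
        Complex.ofReal_mul, Complex.mul_cpow_ofReal_nonneg (by positivity) hwu.le]
      ring
    have hexp1 : ((((Real.exp t * (1 - Real.exp (-t)))) : ℝ):ℂ)^ν
        = Complex.exp ((t:ℂ)*ν) * (((1 - Real.exp (-t)):ℝ):ℂ)^ν := by
      rw [Complex.ofReal_mul, Complex.mul_cpow_ofReal_nonneg (Real.exp_pos t).le hu0.le,
        cpow_exp]
    have hbase : (1 : ℂ) - ((1 - Real.exp (-t) : ℝ):ℂ) = ((Real.exp (-t):ℝ):ℂ) := by
      push_cast; ring
    rw [mul_assoc, hsc, hexp1]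
    simp only [hg, hC, Complex.real_smul, hbase, cpow_exp]
    rw [Complex.ofReal_exp]
    have hfin : Complex.exp (-(t:ℂ)*μ) * Complex.exp ((t:ℂ)*ν)
        = Complex.exp (((-t:ℝ):ℂ)) * Complex.exp (((-t:ℝ):ℂ)*(μ-ν-1)) := by
      rw [← Complex.exp_add, ← Complex.exp_add]
      congr 1
      push_cast
      ring
    linear_combination (((Real.cosh α/2 : ℝ):ℂ)^ν * (((1 - Real.exp (-t)):ℝ):ℂ)^ν
      * (((1 - wA α*(1 - Real.exp (-t))):ℝ):ℂ)^ν) * hfin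
  rw [setIntegral_congr_fun measurableSet_Ioi hpt, ← subst_exp g]
  -- expand in series on (0,1)
  have hser : ∀ u ∈ Ioo (0:ℝ) 1, g u
      = ∑' n : ℕ, (C * (pochC (-ν) n / n.factorial) * ((wA α:ℝ):ℂ)^n)
          * ((u:ℂ)^(ν + n) * (1 - (u:ℂ))^(μ - ν - 1)) := by
    intro u hu
    obtain ⟨hu0, hu1⟩ := hu
    have hwu0 : 0 < wA α * u := by positivity
    have hwu1 : wA α * u < 1 := by nlinarith
    have hbin := (binomial_hasSum ν hwu0 hwu1).mul_left
      (C * ((1 - (u:ℂ))^(μ-ν-1) * ((u:ℝ):ℂ)^ν))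
    have heq : (fun n : ℕ => (C * ((1 - (u:ℂ))^(μ-ν-1) * ((u:ℝ):ℂ)^ν))
          * (pochC (-ν) n / n.factorial * ((wA α*u:ℝ):ℂ)^n))
        = fun n : ℕ => (C * (pochC (-ν) n / n.factorial) * ((wA α:ℝ):ℂ)^n)
          * ((u:ℂ)^(ν + n) * (1 - (u:ℂ))^(μ - ν - 1)) := by
      funext n
      have hcpa : (u:ℂ)^(ν + (n:ℂ)) = (u:ℂ)^ν * ((u:ℂ))^(n:ℕ) := by
        rw [Complex.cpow_add _ _ (by exact_mod_cast hu0.ne'), Complex.cpow_natCast]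
      rw [hcpa]
      push_cast [mul_pow]
      ring
    rw [heq] at hbin
    have hb : ((1 - wA α*u:ℝ):ℂ) = 1 - ((wA α*u:ℝ):ℂ) := by push_cast; ring
    have hgu : g u = (C * ((1 - (u:ℂ))^(μ-ν-1) * ((u:ℝ):ℂ)^ν)) * (1 - ((wA α*u:ℝ):ℂ))^ν := by
      simp only [hg]
      rw [hb]
      ring
    rw [hgu, ← hbin.tsum_eq]
  rw [setIntegral_congr_fun measurableSet_Ioo hser]
  -- interchange sum and integral
  have hFint : ∀ n : ℕ, IntegrableOn (fun u : ℝ =>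
      (C * (pochC (-ν) n / n.factorial) * ((wA α:ℝ):ℂ)^n)
        * ((u:ℂ)^(ν + n) * (1 - (u:ℂ))^(μ - ν - 1))) (Ioo (0:ℝ) 1) := by
    intro n
    exact (term_integrable ν μ hν hμν n).const_mul _
  have hJint : IntegrableOn (fun u : ℝ => ‖(u:ℂ)^ν * (1 - (u:ℂ))^(μ - ν - 1)‖) (Ioo (0:ℝ) 1) := by
    have h0 := (term_integrable ν μ hν hμν 0).norm
    simpa [IntegrableOn] using h0
  set J : ℝ := ∫ u in Ioo (0:ℝ) 1, ‖(u:ℂ)^ν * (1 - (u:ℂ))^(μ - ν - 1)‖ with hJ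
  have hJ0 : 0 ≤ J := by
    rw [hJ]
    positivity
  have hcn : ∀ n : ℕ, ‖C * (pochC (-ν) n / n.factorial) * ((wA α:ℝ):ℂ)^n‖
      = ‖C‖ * (‖pochC (-ν) n‖ / n.factorial) * (wA α)^n := by
    intro n
    rw [norm_mul, norm_mul, norm_div, norm_pow]
    congr 2
    · simp
    · rw [Complex.norm_real, Real.norm_eq_abs, _root_.abs_of_pos hw0]
  have hptbd : ∀ n : ℕ, ∀ u ∈ Ioo (0:ℝ) 1,
      ‖(C * (pochC (-ν) n / n.factorial) * ((wA α:ℝ):ℂ)^n)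
        * ((u:ℂ)^(ν + n) * (1 - (u:ℂ))^(μ - ν - 1))‖
      ≤ (‖C‖ * (‖pochC (-ν) n‖ / n.factorial) * (wA α)^n)
          * ‖(u:ℂ)^ν * (1 - (u:ℂ))^(μ - ν - 1)‖ := by
    intro n u hu
    obtain ⟨hu0, hu1⟩ := hu
    rw [norm_mul, hcn, norm_mul, norm_mul]
    have hle : ‖(u:ℂ)^(ν + (n:ℂ))‖ ≤ ‖(u:ℂ)^ν‖ := by
      rw [show ((u:ℂ)) = (((u:ℝ)):ℂ) from rfl]
      rw [Complex.norm_cpow_eq_rpow_re_of_pos hu0, Complex.norm_cpow_eq_rpow_re_of_pos hu0]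
      apply Real.rpow_le_rpow_of_exponent_ge hu0 hu1.le
      simp only [Complex.add_re, Complex.natCast_re]
      have : (0:ℝ) ≤ n := Nat.cast_nonneg n
      linarith
    have h2 : (0:ℝ) ≤ ‖(1 - (u:ℂ))^(μ - ν - 1)‖ := norm_nonneg _
    have h3 : (0:ℝ) ≤ ‖C‖ * (‖pochC (-ν) n‖ / n.factorial) * (wA α)^n := by positivity
    calc ‖C‖ * (‖pochC (-ν) n‖ / ↑n.factorial) * wA α ^ n * (‖(u:ℂ)^(ν + (n:ℂ))‖ * ‖(1 - (u:ℂ))^(μ - ν - 1)‖)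
        ≤ ‖C‖ * (‖pochC (-ν) n‖ / ↑n.factorial) * wA α ^ n * (‖(u:ℂ)^ν‖ * ‖(1 - (u:ℂ))^(μ - ν - 1)‖) := by
          gcongr
      _ = _ := by ring
  have hFsum : Summable (fun n : ℕ => ∫ u in Ioo (0:ℝ) 1,
      ‖(C * (pochC (-ν) n / n.factorial) * ((wA α:ℝ):ℂ)^n)
        * ((u:ℂ)^(ν + n) * (1 - (u:ℂ))^(μ - ν - 1))‖) := by
    have hub : ∀ n : ℕ, (∫ u in Ioo (0:ℝ) 1,
        ‖(C * (pochC (-ν) n / n.factorial) * ((wA α:ℝ):ℂ)^n)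
          * ((u:ℂ)^(ν + n) * (1 - (u:ℂ))^(μ - ν - 1))‖)
        ≤ (‖C‖ * (‖pochC (-ν) n‖ / n.factorial) * (wA α)^n) * J := by
      intro n
      rw [hJ, ← MeasureTheory.integral_const_mul]
      apply setIntegral_mono_on ((hFint n).norm) (hJint.const_mul _) measurableSet_Ioo
      exact hptbd n
    apply Summable.of_nonneg_of_le (fun n => integral_nonneg (fun u => norm_nonneg _)) hub
    have hs := (summable_poch_aux (-ν) hw0.le hw1).mul_left (‖C‖ * J)
    apply Summable.of_nonneg_of_le (fun n => by positivity) _ hs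
    intro n
    have h1 : ‖pochC (-ν) n‖ / n.factorial * (wA α)^n
        ≤ ‖pochC (-ν) n‖ / n.factorial * ((n:ℝ)+1)^2 * (wA α)^n := by
      have hb : (1:ℝ) ≤ ((n:ℝ)+1)^2 := by nlinarith [Nat.cast_nonneg (α := ℝ) n]
      have hnn : (0:ℝ) ≤ ‖pochC (-ν) n‖ / n.factorial * (wA α)^n := by positivity
      nlinarith [hnn, pow_nonneg hw0.le n, div_nonneg (norm_nonneg (pochC (-ν) n)) (Nat.cast_nonneg n.factorial : (0:ℝ) ≤ n.factorial)]
    calc ‖C‖ * (‖pochC (-ν) n‖ / n.factorial) * (wA α)^n * J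
        = (‖C‖ * J) * (‖pochC (-ν) n‖ / n.factorial * (wA α)^n) := by ring
      _ ≤ (‖C‖ * J) * (‖pochC (-ν) n‖ / n.factorial * ((n:ℝ)+1)^2 * (wA α)^n) := by
          have : (0:ℝ) ≤ ‖C‖ * J := by positivity
          nlinarith [h1, this]
  rw [← MeasureTheory.integral_tsum_of_summable_integral_norm hFint hFsum]
  -- evaluate each term
  have hterm : ∀ n : ℕ, (∫ u in Ioo (0:ℝ) 1,
      (C * (pochC (-ν) n / n.factorial) * ((wA α:ℝ):ℂ)^n)
        * ((u:ℂ)^(ν + n) * (1 - (u:ℂ))^(μ - ν - 1)))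
      = C * Complex.Gamma (ν+1) * Complex.Gamma (μ-ν)
        * (pochC (-ν) n * pochC (ν + 1) n /
            (Complex.Gamma ((n : ℂ) + 1 + μ) * (n.factorial : ℂ)) * ((wA α : ℝ):ℂ)^n) := by
    intro n
    rw [MeasureTheory.integral_const_mul, term_integral ν μ hν hμν n]
    have hgp : Complex.Gamma (ν+1+(n:ℂ)) = Complex.Gamma (ν+1) * pochC (ν+1) n := by
      apply gamma_poch' (ν+1) ?_ n
      simp only [Complex.add_re, Complex.one_re]
      linarith
    rw [hgp, show μ+1+(n:ℂ) = (n:ℂ)+1+μ from by ring]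
    ring
  rw [tsum_congr hterm, tsum_mul_left]

theorem stmt0 (α : ℝ) (ν μ : ℂ) (hν : -1 < ν.re) (hμν : ν.re < μ.re) :
    ferrersP ν (-μ) (Real.tanh α) =
      (2 : ℂ) ^ ν * Complex.exp (-(α : ℂ) * μ) * ((Real.cosh α : ℝ) : ℂ) ^ (-ν) /
          (Complex.Gamma (μ - ν) * Complex.Gamma (1 + ν)) *
        ∫ t in Set.Ioi (0 : ℝ),
          Complex.exp (-(t : ℂ) * μ) * ((Real.sinh (t / 2) : ℝ) : ℂ) ^ ν *
            ((Real.cosh (t / 2 + α) : ℝ) : ℂ) ^ ν := by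
  rw [integral_eval α ν μ hν hμν]
  unfold ferrersP
  have hc : 0 < Real.cosh α := Real.cosh_pos α
  have hs : Real.cosh α + Real.sinh α = Real.exp α := Real.cosh_add_sinh α
  have hs2 : Real.cosh α - Real.sinh α = Real.exp (-α) := Real.cosh_sub_sinh α
  have h1 : ((1 + Real.tanh α)/(1 - Real.tanh α) : ℝ) = Real.exp (2*α) := by
    rw [Real.tanh_eq_sinh_div_cosh]
    have e1 : 1 + Real.sinh α / Real.cosh α = Real.exp α / Real.cosh α := by
      field_simp
      linarith
    have e2 : 1 - Real.sinh α / Real.cosh α = Real.exp (-α) / Real.cosh α := by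
      field_simp
      linarith
    rw [e1, e2]
    have e3 : Real.exp α / Real.cosh α / (Real.exp (-α) / Real.cosh α)
        = Real.exp α / Real.exp (-α) := by
      have h1 := (Real.exp_pos (-α)).ne'
      field_simp
    rw [e3, ← Real.exp_sub]
    ring_nf
  have h2 : ((1 - Real.tanh α)/2 : ℝ) = wA α := by
    unfold wA
    rw [Real.tanh_eq_sinh_div_cosh]
    field_simp
    linarith [hs2]
  rw [h1, h2, cpow_exp]
  have hexp : Complex.exp (((2*α:ℝ):ℂ) * (-μ/2)) = Complex.exp (-(α:ℂ)*μ) := by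
    congr 1
    push_cast
    ring
  rw [hexp]
  simp only [sub_neg_eq_add]
  have hΓμν : Complex.Gamma (μ-ν) ≠ 0 := by
    apply Complex.Gamma_ne_zero_of_re_pos
    simp only [Complex.sub_re]
    linarith
  have hΓν : Complex.Gamma (1+ν) ≠ 0 := by
    apply Complex.Gamma_ne_zero_of_re_pos
    simp only [Complex.add_re, Complex.one_re]
    linarith
  have hΓcomm : Complex.Gamma (ν+1) = Complex.Gamma (1+ν) := by rw [add_comm]
  have hmul : ((Real.cosh α / 2 : ℝ):ℂ)^ν = ((Real.cosh α:ℝ):ℂ)^ν * (((2⁻¹:ℝ)):ℂ)^ν := by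
    rw [show (Real.cosh α/2) = Real.cosh α * (2⁻¹:ℝ) from by ring, Complex.ofReal_mul,
      Complex.mul_cpow_ofReal_nonneg hc.le (by norm_num)]
  have hinv : (((2⁻¹:ℝ)):ℂ)^ν = ((2:ℂ)^ν)⁻¹ := by
    rw [show (((2⁻¹:ℝ)):ℂ) = ((2:ℂ))⁻¹ from by norm_num]
    apply Complex.inv_cpow
    rw [show (2:ℂ) = ((2:ℝ):ℂ) from by norm_num,
      Complex.arg_ofReal_of_nonneg (by norm_num : (0:ℝ) ≤ 2)]
    exact Ne.symm Real.pi_ne_zero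
  have hneg : ((Real.cosh α:ℝ):ℂ)^(-ν) = (((Real.cosh α:ℝ):ℂ)^ν)⁻¹ := Complex.cpow_neg _ _
  have h2ν : (2:ℂ)^ν ≠ 0 := by
    rw [Ne, Complex.cpow_eq_zero_iff]
    push_neg
    intro h
    norm_num at h
  have hcν : ((Real.cosh α:ℝ):ℂ)^ν ≠ 0 := by
    rw [Ne, Complex.cpow_eq_zero_iff]
    push_neg
    intro h
    rw [Complex.ofReal_eq_zero] at h
    exact absurd h hc.ne'
  rw [hmul, hinv, hneg, hΓcomm]
  have hcν' : Complex.cosh (α:ℂ) ^ ν ≠ 0 := by rwa [Complex.ofReal_cosh] at hcν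
  field_simp
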